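/- Let H be a proper subgroup of a finite group G generated by an ordered set S = {g₁,…,g_k}. Let r = g₁^{ε₁}⋯g_k^{ε_k} be a random subproduct, where ε₁,…,ε_k are independent uniform {0,1}-valued random variables. Then with probability at least 1/2, |Hr ∖ H| ≥ |H|/2. -/

import Mathlib

open Finset

private lemma aux_event {G : Type*} [Fintype G] [Group G] [DecidableEq G]
    (H : Subgroup G) [DecidablePred (· ∈ H)] (r : G) :
    (Nat.card H ≤ 2 * ((((Finset.univ : Finset G).filter (· ∈ H)).image (· * r) \
      (Finset.univ : Finset G).filter (· ∈ H)).card)) ↔ r ∉ H := by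
  have hc : Nat.card H = ((Finset.univ : Finset G).filter (· ∈ H)).card := by
    rw [Nat.card_eq_fintype_card, Fintype.card_subtype]
  have hpos : 0 < ((Finset.univ : Finset G).filter (· ∈ H)).card :=
    Finset.card_pos.2 ⟨1, by simp [H.one_mem]⟩
  by_cases hrH : r ∈ H
  · have himg : ((Finset.univ : Finset G).filter (· ∈ H)).image (· * r) =
        (Finset.univ : Finset G).filter (· ∈ H) := by
      ext g
      simp only [Finset.mem_image, Finset.mem_filter, Finset.mem_univ, true_and]
      constructor
      · rintro ⟨h, hh, rfl⟩; exact H.mul_mem hh hrH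
      · intro hg
        exact ⟨g * r⁻¹, H.mul_mem hg (H.inv_mem hrH), by group⟩
    rw [himg, Finset.sdiff_self, Finset.card_empty, Nat.mul_zero]
    exact iff_of_false (by omega) (by simpa using hrH)
  · have hdisj : Disjoint (((Finset.univ : Finset G).filter (· ∈ H)).image (· * r))
        ((Finset.univ : Finset G).filter (· ∈ H)) := by
      rw [Finset.disjoint_left]
      rintro g hg hg'
      obtain ⟨h, hh, rfl⟩ := Finset.mem_image.1 hg
      simp only [Finset.mem_filter, Finset.mem_univ, true_and] at hh hg'
      exact hrH (by simpa using H.mul_mem (H.inv_mem hh) hg')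
    rw [Finset.sdiff_eq_self_of_disjoint hdisj,
      Finset.card_image_of_injective _ (mul_left_injective r)]
    exact iff_of_true (by omega) hrH

private lemma aux_update {G : Type*} [Monoid G] {k : ℕ} (S : Fin k → G)
    (ε : Fin k → Bool) (j : Fin k) (b : Bool) :
    (List.ofFn fun i => if (Function.update ε j b) i then S i else 1) =
    (List.ofFn fun i => if ε i then S i else 1).set j (if b then S j else 1) := by
  apply List.ext_getElem
  · simp
  · intro n h1 h2
    simp only [List.getElem_set, List.getElem_ofFn, Function.update_apply]
    have hlen : n < k := by simpa using h1
    by_cases hn : (j : ℕ) = n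
    · have : (⟨n, hlen⟩ : Fin k) = j := by exact Fin.ext hn.symm
      simp [hn, this]
    · have : (⟨n, hlen⟩ : Fin k) ≠ j := fun h => hn (by rw [← h])
      simp [hn, this]

private lemma aux_key {G : Type*} [Group G] {k : ℕ} (S : Fin k → G) (H : Subgroup G)
    (j : Fin k) (hj : S j ∉ H) (htail : ∀ i : Fin k, j < i → S i ∈ H) (ε : Fin k → Bool)
    (h1 : (List.ofFn fun i => if ε i then S i else 1).prod ∈ H)
    (h2 : (List.ofFn fun i => if (Function.update ε j (!ε j)) i then S i else 1).prod ∈ H) :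
    False := by
  set l := List.ofFn fun i => if ε i then S i else 1 with hl
  have hjk : (j : ℕ) < k := j.isLt
  have hjl : (j : ℕ) < l.length := by simp [hl]
  -- the tail product lies in H
  have hD : (l.drop ((j : ℕ) + 1)).prod ∈ H := by
    apply Subgroup.list_prod_mem
    intro x hx
    rw [List.mem_iff_getElem] at hx
    obtain ⟨m, hm, rfl⟩ := hx
    have hmk : (j : ℕ) + 1 + m < k := by
      have : m < l.length - ((j : ℕ) + 1) := by simpa using hm
      simp only [hl, List.length_ofFn] at this
      omega
    have hml : (j : ℕ) + 1 + m < l.length := by simp only [hl, List.length_ofFn]; omega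
    have heq : (l.drop ((j : ℕ) + 1))[m] = l[(j : ℕ) + 1 + m]'hml := List.getElem_drop
    rw [heq]
    have : l[(j : ℕ) + 1 + m]'hml = if ε ⟨(j : ℕ) + 1 + m, hmk⟩ then S ⟨(j : ℕ) + 1 + m, hmk⟩ else 1 := by
      simp [hl, List.getElem_ofFn]
    rw [this]
    split
    · exact htail _ (by simp [Fin.lt_def]; omega)
    · exact H.one_mem
  have hprod1 : l.prod = (l.take (j : ℕ)).prod * l[(j : ℕ)] * (l.drop ((j : ℕ) + 1)).prod := by
    rw [mul_assoc, ← List.prod_cons, ← List.drop_eq_getElem_cons hjl,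
      List.prod_take_mul_prod_drop]
  rw [hprod1] at h1
  rw [aux_update S ε j (!ε j), List.prod_set, if_pos hjl, ← hl] at h2
  have hx : (l[(j : ℕ)])⁻¹ * (if !ε j then S j else 1) ∈ H := by
    have hmem := H.mul_mem (H.mul_mem hD (H.mul_mem (H.inv_mem h1) h2)) (H.inv_mem hD)
    convert hmem using 1
    group
  have hcj : l[(j : ℕ)] = if ε j then S j else 1 := by
    simp [hl, List.getElem_ofFn]
  rw [hcj] at hx
  cases hεj : ε j <;> rw [hεj] at hx <;> simp [H.inv_mem_iff] at hx <;> exact hj hx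

/-- Random subproduct lemma: for H a proper subgroup of G = ⟨S⟩ and r a random
    subproduct on the ordered set S, with probability ≥ 1/2 (over the 2^k choices of
    exponents), |Hr \ H| ≥ |H|/2. -/
theorem stmt1 {G : Type*} [Fintype G] [Group G] [DecidableEq G]
    (k : ℕ) (S : Fin k → G) (hgen : Subgroup.closure (Set.range S) = ⊤)
    (H : Subgroup G) [DecidablePred (· ∈ H)] (hH : H ≠ ⊤) :
    2 ^ k ≤ 2 * ((Finset.univ : Finset (Fin k → Bool)).filter (fun ε =>
      Nat.card H ≤ 2 * ((((Finset.univ : Finset G).filter (· ∈ H)).image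
          (· * (List.ofFn fun i => if ε i then S i else 1).prod) \
        (Finset.univ : Finset G).filter (· ∈ H)).card))).card := by
  -- choose the largest index j with S j ∉ H
  have hne : (Finset.univ.filter fun i : Fin k => S i ∉ H).Nonempty := by
    by_contra hc
    rw [Finset.not_nonempty_iff_eq_empty, Finset.filter_eq_empty_iff] at hc
    apply hH
    have hsub : Set.range S ⊆ (H : Set G) := by
      rintro _ ⟨i, rfl⟩
      by_contra h
      exact hc (Finset.mem_univ i) h
    have htop : (⊤ : Subgroup G) ≤ H := hgen ▸ (Subgroup.closure_le H).2 hsub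
    exact top_le_iff.mp htop
  set j := (Finset.univ.filter fun i : Fin k => S i ∉ H).max' hne with hjdef
  have hjnot : S j ∉ H := by
    have := Finset.max'_mem _ hne
    simpa using this
  have htail : ∀ i : Fin k, j < i → S i ∈ H := by
    intro i hi
    by_contra h
    have : i ≤ j := Finset.le_max' _ i (by simpa using h)
    exact absurd hi (not_lt.2 this)
  -- rewrite the event as r ∉ H
  have hfilter : ((Finset.univ : Finset (Fin k → Bool)).filter (fun ε =>
      Nat.card H ≤ 2 * ((((Finset.univ : Finset G).filter (· ∈ H)).image
          (· * (List.ofFn fun i => if ε i then S i else 1).prod) \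
        (Finset.univ : Finset G).filter (· ∈ H)).card))) =
      (Finset.univ : Finset (Fin k → Bool)).filter (fun ε =>
        ¬ ((List.ofFn fun i => if ε i then S i else 1).prod ∈ H)) := by
    apply Finset.filter_congr
    intro ε _
    exact aux_event H _
  rw [hfilter]
  have hsplit := Finset.card_filter_add_card_filter_not
    (s := (Finset.univ : Finset (Fin k → Bool)))
    (fun ε => (List.ofFn fun i => if ε i then S i else 1).prod ∈ H)
  have hcard_univ : (Finset.univ : Finset (Fin k → Bool)).card = 2 ^ k := by
    simp [Fintype.card_fun]
  have hle : ((Finset.univ : Finset (Fin k → Bool)).filter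
      (fun ε => (List.ofFn fun i => if ε i then S i else 1).prod ∈ H)).card ≤
      ((Finset.univ : Finset (Fin k → Bool)).filter
      (fun ε => ¬ ((List.ofFn fun i => if ε i then S i else 1).prod ∈ H))).card := by
    apply Finset.card_le_card_of_injOn (fun ε => Function.update ε j (!ε j))
    · intro ε hε
      simp only [Finset.mem_coe, Finset.mem_filter, Finset.mem_univ, true_and] at hε ⊢
      intro h2
      exact aux_key S H j hjnot htail ε hε h2
    · intro a _ b _ hab
      funext i
      have hcf := congrFun hab i
      by_cases hi : i = j
      · subst hi
        simpa using hcf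
      · simpa [Function.update_of_ne hi] using hcf
  rw [hcard_univ] at hsplit
  set A := ((Finset.univ : Finset (Fin k → Bool)).filter
      (fun ε => (List.ofFn fun i => if ε i then S i else 1).prod ∈ H)).card with hA
  set B := ((Finset.univ : Finset (Fin k → Bool)).filter
      (fun ε => ¬ ((List.ofFn fun i => if ε i then S i else 1).prod ∈ H))).card with hB
  clear_value A B
  clear hA hB hfilter
  omega
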